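/- Let p, q, r be pairwise distinct sentential variables and let G be the class of weighting functions g with g(q) > g(p) and g(q) > g(r). Then Op ⊨_G O(p∧q) ∨ O(p∧¬q). -/

import Mathlib

/-- Formulas of the preference language L, generated from sentential
variables by negation, conjunction, and the binary connective ⪰. -/
inductive Fml (α : Type) : Type where
  | var : α → Fml α
  | neg : Fml α → Fml α
  | conj : Fml α → Fml α → Fml α
  | succeq : Fml α → Fml α → Fml α

namespace Fml

variable {α : Type}

/-- φ∨ψ := ¬(¬φ∧¬ψ) -/
def disj (φ ψ : Fml α) : Fml α := neg (conj (neg φ) (neg ψ))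
/-- φ→ψ := ¬φ∨ψ -/
def impl (φ ψ : Fml α) : Fml α := disj (neg φ) ψ
/-- φ↔ψ := (φ→ψ)∧(ψ→φ) -/
def iffF (φ ψ : Fml α) : Fml α := conj (impl φ ψ) (impl ψ φ)
/-- φ≻ψ := (φ⪰ψ)∧¬(ψ⪰φ) -/
def succ (φ ψ : Fml α) : Fml α := conj (succeq φ ψ) (neg (succeq ψ φ))
/-- ⊤ := p→p for a fixed variable p -/
def topF (p : α) : Fml α := impl (var p) (var p)
/-- ⊥ := ¬⊤ -/
def botF (p : α) : Fml α := neg (topF p)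
/-- ◻φ := ¬(¬φ⪰¬φ) -/
def box (φ : Fml α) : Fml α := neg (succeq (neg φ) (neg φ))
/-- ◇φ := φ⪰φ -/
def dia (φ : Fml α) : Fml α := succeq φ φ
/-- Conditional obligation C(φ,ψ) := (φ∧ψ) ≻ (φ∧¬ψ) -/
def Cond (φ ψ : Fml α) : Fml α := succ (conj φ ψ) (conj φ (neg ψ))
/-- Obligation Oψ := C(⊤,ψ), where ⊤ uses the fixed variable p -/
def Ob (p : α) (ψ : Fml α) : Fml α := Cond (topF p) ψ
/-- Permission Pψ := ¬O¬ψ -/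
def Perm (p : α) (ψ : Fml α) : Fml α := neg (Ob p (neg ψ))

end Fml

/-- A model (W,S,U,T): a nonempty set of worlds, a selection function
picking a member of each nonempty set of worlds, a real-valued utility
function, and a truth-assignment. -/
structure Model (α : Type) : Type 1 where
  W : Type
  nonempty : Nonempty W
  S : W → Set W → W
  S_mem : ∀ (w : W) (A : Set W), A.Nonempty → S w A ∈ A
  U : W → ℝ
  T : α → Set W

open Classical in
/-- The proposition ⟦φ⟧_M expressed by φ in the model M. -/
noncomputable def sat {α : Type} (M : Model α) : Fml α → Set M.W
  | .var p => M.T p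
  | .neg θ => (sat M θ)ᶜ
  | .conj θ ψ => sat M θ ∩ sat M ψ
  | .succeq θ ψ =>
      if sat M θ = ∅ ∨ sat M ψ = ∅ then ∅
      else {w | M.U (M.S w (sat M θ)) ≥ M.U (M.S w (sat M ψ))}

/-- φ ⊨ ψ : in every model, ⟦φ⟧ ⊆ ⟦ψ⟧. -/
def Implies {α : Type} (φ ψ : Fml α) : Prop :=
  ∀ M : Model α, sat M φ ⊆ sat M ψ

/-- ⊨ φ : in every model, ⟦φ⟧ = W. -/
def Valid {α : Type} (φ : Fml α) : Prop :=
  ∀ M : Model α, sat M φ = Set.univ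

/-- S is a selection function on W = 𝒫(Props): for each world w and
nonempty set A of worlds, S w A ∈ A. -/
def IsSelection {α : Type} (S : Set α → Set (Set α) → Set α) : Prop :=
  ∀ (w : Set α) (A : Set (Set α)), A.Nonempty → S w A ∈ A

/-- S is Δ-based: no w₁ ∈ A has w Δ w₁ properly included in w Δ S(w,A). -/
def DeltaBased {α : Type} (S : Set α → Set (Set α) → Set α) : Prop :=
  ∀ (w : Set α) (A : Set (Set α)), A.Nonempty →
    ¬ ∃ w1 ∈ A, symmDiff w w1 ⊂ symmDiff w (S w A)

/-- A Δ model: W = 𝒫(Props), T(p) = {w | p ∈ w}, and a Δ-based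
selection function. -/
structure DeltaModel (α : Type) : Type where
  S : Set α → Set (Set α) → Set α
  S_mem : ∀ (w : Set α) (A : Set (Set α)), A.Nonempty → S w A ∈ A
  delta : DeltaBased S
  U : Set α → ℝ

/-- The underlying model of a Δ model. -/
def DeltaModel.toModel {α : Type} (M : DeltaModel α) : Model α where
  W := Set α
  nonempty := ⟨∅⟩
  S := M.S
  S_mem := M.S_mem
  U := M.U
  T := fun p => {w : Set α | p ∈ w}

/-- φ ⊨_Δ ψ : in every Δ model, ⟦φ⟧ ⊆ ⟦ψ⟧. -/
def DeltaImplies {α : Type} (φ ψ : Fml α) : Prop :=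
  ∀ M : DeltaModel α, sat M.toModel φ ⊆ sat M.toModel ψ

/-- The g-distance between two worlds: the (possibly infinite) sum of the
weights of the variables in their symmetric difference. -/
noncomputable def gdist {α : Type} (g : α → ℝ) (w0 w1 : Set α) : ENNReal :=
  ∑' v : ↥(symmDiff w0 w1), ENNReal.ofReal (g v)

/-- S is g-based: no w' ∈ A is strictly g-closer to w than S(w,A). -/
def GBased {α : Type} (g : α → ℝ) (S : Set α → Set (Set α) → Set α) : Prop :=
  ∀ (w : Set α) (A : Set (Set α)), A.Nonempty →
    ¬ ∃ w' ∈ A, gdist g w w' < gdist g w (S w A)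

open Fml

namespace PrefAux

variable {α : Type}

lemma sat_top (M : Model α) (p0 : α) : sat M (topF p0) = Set.univ := by
  ext w
  simp [Fml.topF, Fml.impl, Fml.disj, sat]

lemma sat_disj (M : Model α) (φ ψ : Fml α) :
    sat M (disj φ ψ) = sat M φ ∪ sat M ψ := by
  ext w
  simp only [Fml.disj, sat, Set.mem_compl_iff, Set.mem_inter_iff, Set.mem_union]
  tauto

lemma mem_Ob_iff (M : Model α) (p0 : α) (ψ : Fml α) (w : M.W)
    (h1 : sat M ψ ≠ ∅) (h2 : (sat M ψ)ᶜ ≠ ∅) :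
    w ∈ sat M (Ob p0 ψ) ↔ M.U (M.S w (sat M ψ)) > M.U (M.S w ((sat M ψ)ᶜ)) := by
  have hA : sat M (conj (topF p0) ψ) = sat M ψ := by
    show sat M (topF p0) ∩ sat M ψ = sat M ψ
    rw [sat_top]; exact Set.univ_inter _
  have hB : sat M (conj (topF p0) (neg ψ)) = (sat M ψ)ᶜ := by
    show sat M (topF p0) ∩ (sat M ψ)ᶜ = (sat M ψ)ᶜ
    rw [sat_top]; exact Set.univ_inter _
  have hcond : ¬ (sat M (conj (topF p0) ψ) = ∅ ∨ sat M (conj (topF p0) (neg ψ)) = ∅) := by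
    rw [hA, hB]; tauto
  have hcond' : ¬ (sat M (conj (topF p0) (neg ψ)) = ∅ ∨ sat M (conj (topF p0) ψ) = ∅) := by
    rw [hA, hB]; tauto
  show w ∈ sat M (succeq (conj (topF p0) ψ) (conj (topF p0) (neg ψ))) ∩
      (sat M (succeq (conj (topF p0) (neg ψ)) (conj (topF p0) ψ)))ᶜ ↔ _
  rw [show sat M (succeq (conj (topF p0) ψ) (conj (topF p0) (neg ψ))) =
      {v | M.U (M.S v (sat M (conj (topF p0) ψ))) ≥ M.U (M.S v (sat M (conj (topF p0) (neg ψ))))} by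
        rw [sat]; exact if_neg hcond]
  rw [show sat M (succeq (conj (topF p0) (neg ψ)) (conj (topF p0) ψ)) =
      {v | M.U (M.S v (sat M (conj (topF p0) (neg ψ)))) ≥ M.U (M.S v (sat M (conj (topF p0) ψ)))} by
        rw [sat]; exact if_neg hcond']
  rw [hA, hB]
  simp only [Set.mem_inter_iff, Set.mem_compl_iff, Set.mem_setOf_eq]
  constructor
  · rintro ⟨_, h⟩; exact not_le.mp h
  · intro h; exact ⟨h.le, not_le.mpr h⟩

lemma mem_toggle {z : Set α} {v u : α} (h : u ≠ v) : u ∈ symmDiff z {v} ↔ u ∈ z := by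
  simp [Set.mem_symmDiff, h]

lemma symmDiff_S_subset (M : DeltaModel α) (w : Set α) (A : Set (Set α)) (hA : A.Nonempty)
    (V : Set α) (hcl : ∀ z ∈ A, ∀ v, v ∉ V → symmDiff z {v} ∈ A) :
    symmDiff w (M.S w A) ⊆ V := by
  intro v hv
  by_contra hvV
  refine M.delta w A hA ⟨symmDiff (M.S w A) {v}, hcl _ (M.S_mem w A hA) v hvV, ?_⟩
  have h1 : symmDiff w (symmDiff (M.S w A) {v}) = (symmDiff w (M.S w A)) \ {v} := by
    rw [← symmDiff_assoc]
    ext u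
    rcases eq_or_ne u v with rfl | hu
    · simp [Set.mem_symmDiff, hv]
    · simp [Set.mem_symmDiff, hu]
  rw [h1]
  exact Set.sdiff_singleton_ssubset.mpr hv

lemma S_eq_self (M : DeltaModel α) (w : Set α) (A : Set (Set α)) (hA : A.Nonempty)
    (hw : w ∈ A) : M.S w A = w := by
  by_contra h
  refine M.delta w A hA ⟨w, hw, ?_⟩
  rw [symmDiff_self]
  have hne : symmDiff w (M.S w A) ≠ ⊥ := fun he => h (symmDiff_eq_bot.mp he).symm
  rw [Set.bot_eq_empty] at hne ⊢
  exact Set.empty_ssubset.mpr (Set.nonempty_iff_ne_empty.mpr hne)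

lemma eq_insert_of_single {w z : Set α} {p : α} (hsub : symmDiff w z ⊆ {p}) (hp : p ∈ z) :
    z = insert p w := by
  ext v
  rcases eq_or_ne v p with rfl | hvp
  · simp [hp]
  · have hns : v ∉ symmDiff w z := fun hmem => hvp (hsub hmem)
    simp only [Set.mem_symmDiff, not_or, not_and, not_not] at hns
    simp only [Set.mem_insert_iff, hvp, false_or]
    tauto

lemma eq_diff_of_single {w z : Set α} {p : α} (hsub : symmDiff w z ⊆ {p}) (hp : p ∉ z) :
    z = w \ {p} := by
  ext v
  rcases eq_or_ne v p with rfl | hvp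
  · simp [hp]
  · have hns : v ∉ symmDiff w z := fun hmem => hvp (hsub hmem)
    simp only [Set.mem_symmDiff, not_or, not_and, not_not] at hns
    simp only [Set.mem_diff, Set.mem_singleton_iff, hvp, and_true]
    tauto

lemma eq_insert_of {w z : Set α} {p q : α} (hqp : q ≠ p) (hsub : symmDiff w z ⊆ {p, q})
    (hp : p ∈ z) (hq : q ∈ z ↔ q ∈ w) : z = insert p w := by
  ext v
  rcases eq_or_ne v p with rfl | hvp
  · simp [hp]
  rcases eq_or_ne v q with rfl | hvq
  · simpa [hvp] using hq
  · have hns : v ∉ symmDiff w z := fun hmem => by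
      have := hsub hmem
      simp [hvp, hvq] at this
    simp only [Set.mem_symmDiff, not_or, not_and, not_not] at hns
    simp only [Set.mem_insert_iff, hvp, false_or]
    tauto

lemma gdist_singleton (g : α → ℝ) {w z : Set α} {p : α} (h : symmDiff w z = {p}) :
    gdist g w z = ENNReal.ofReal (g p) := by
  unfold gdist
  rw [h]
  exact tsum_singleton p (fun v => ENNReal.ofReal (g v))

lemma le_gdist (g : α → ℝ) {w z : Set α} {p : α} (hp : p ∈ symmDiff w z) :
    ENNReal.ofReal (g p) ≤ gdist g w z := by
  unfold gdist
  exact ENNReal.le_tsum (⟨p, hp⟩ : ↥(symmDiff w z))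

lemma keyP (M : DeltaModel α) (p : α) (w : Set α) :
    M.S w {z : Set α | p ∈ z} = insert p w ∧ M.S w {z : Set α | p ∈ z}ᶜ = w \ {p} := by
  constructor
  · have hA : ({z : Set α | p ∈ z}).Nonempty := ⟨({p} : Set α), by show p ∈ ({p} : Set α); simp⟩
    have hsub : symmDiff w (M.S w {z : Set α | p ∈ z}) ⊆ {p} := by
      apply symmDiff_S_subset M w _ hA
      intro z hz v hv
      have hvp : p ≠ v := fun h => hv (by simp [h])
      exact (mem_toggle hvp).mpr hz
    exact eq_insert_of_single hsub (M.S_mem w _ hA)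
  · have hA : ({z : Set α | p ∈ z}ᶜ).Nonempty := ⟨(∅ : Set α), by show (∅ : Set α) ∉ {z : Set α | p ∈ z}; simp⟩
    have hsub : symmDiff w (M.S w {z : Set α | p ∈ z}ᶜ) ⊆ {p} := by
      apply symmDiff_S_subset M w _ hA
      intro z hz v hv
      have hvp : p ≠ v := fun h => hv (by simp [h])
      intro hmem
      exact hz ((mem_toggle hvp).mp hmem)
    exact eq_diff_of_single hsub (M.S_mem w _ hA)

lemma keyA (M : DeltaModel α) {p q : α} (hpq : p ≠ q) (g : α → ℝ) (hg : ∀ v, 0 < g v)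
    (hgp : g q > g p) (hgb : GBased g M.S) (w : Set α) :
    M.S w {z : Set α | p ∈ z ∧ (q ∈ z ↔ q ∈ w)} = insert p w ∧
    M.S w {z : Set α | p ∈ z ∧ (q ∈ z ↔ q ∈ w)}ᶜ = w \ {p} := by
  set A : Set (Set α) := {z : Set α | p ∈ z ∧ (q ∈ z ↔ q ∈ w)} with hAdef
  have hwA : insert p w ∈ A := ⟨by simp, by simp [Ne.symm hpq]⟩
  have hA : A.Nonempty := ⟨insert p w, hwA⟩
  have hAc : Aᶜ.Nonempty := ⟨w \ {p}, by simp [hAdef]⟩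
  have hclA : ∀ z ∈ A, ∀ v, v ∉ ({p, q} : Set α) → symmDiff z {v} ∈ A := by
    intro z hz v hv
    simp only [Set.mem_insert_iff, Set.mem_singleton_iff, not_or] at hv
    refine ⟨(mem_toggle (Ne.symm hv.1)).mpr hz.1, ?_⟩
    rw [mem_toggle (Ne.symm hv.2)]
    exact hz.2
  have hclAc : ∀ z ∈ Aᶜ, ∀ v, v ∉ ({p, q} : Set α) → symmDiff z {v} ∈ Aᶜ := by
    intro z hz v hv hmem
    simp only [Set.mem_insert_iff, Set.mem_singleton_iff, not_or] at hv
    apply hz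
    refine ⟨(mem_toggle (Ne.symm hv.1)).mp hmem.1, ?_⟩
    rw [← mem_toggle (Ne.symm hv.2) (z := z)]
    exact hmem.2
  constructor
  · have hsub := symmDiff_S_subset M w A hA {p, q} hclA
    obtain ⟨h1, h2⟩ := M.S_mem w A hA
    exact eq_insert_of (Ne.symm hpq) hsub h1 h2
  · have hsub := symmDiff_S_subset M w Aᶜ hAc {p, q} hclAc
    by_cases hpw : p ∈ w
    · set z := M.S w Aᶜ with hzdef
      have hzc : z ∈ Aᶜ := M.S_mem w Aᶜ hAc
      have hcand : (w \ {p}) ∈ Aᶜ := by simp [hAdef]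
      have hd : symmDiff w (w \ {p}) = {p} := by
        ext u
        rcases eq_or_ne u p with rfl | hu
        · simp [Set.mem_symmDiff, hpw]
        · simp [Set.mem_symmDiff, hu]
      have hle : gdist g w z ≤ ENNReal.ofReal (g p) := by
        by_contra hlt
        push_neg at hlt
        refine hgb w Aᶜ hAc ⟨w \ {p}, hcand, ?_⟩
        rwa [gdist_singleton g hd]
      have hqns : q ∉ symmDiff w z := by
        intro hqmem
        have h1 := le_gdist g hqmem
        have h2 : ENNReal.ofReal (g p) < ENNReal.ofReal (g q) :=
          (ENNReal.ofReal_lt_ofReal_iff (hg q)).mpr hgp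
        exact absurd (h1.trans hle) (not_le.mpr h2)
      have hsub' : symmDiff w z ⊆ {p} := by
        intro v hv
        have h := hsub hv
        simp only [Set.mem_insert_iff, Set.mem_singleton_iff] at h ⊢
        rcases h with h | rfl
        · exact h
        · exact absurd hv hqns
      have hpz : p ∉ z := by
        have hwInA : w ∈ A := ⟨hpw, Iff.rfl⟩
        have hzw : z ≠ w := fun h => hzc (h ▸ hwInA)
        have hne : symmDiff w z ≠ ∅ := by
          intro he
          exact hzw (symmDiff_eq_bot.mp (by rw [Set.bot_eq_empty]; exact he)).symm
        obtain ⟨v, hv⟩ := Set.nonempty_iff_ne_empty.mpr hne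
        have hvp : v = p := hsub' hv
        subst hvp
        rw [Set.mem_symmDiff] at hv
        tauto
      exact eq_diff_of_single hsub' hpz
    · have hwAc : w ∈ Aᶜ := fun h => hpw h.1
      rw [S_eq_self M w Aᶜ hAc hwAc]
      exact (Set.diff_singleton_eq_self hpw).symm

end PrefAux


open Fml in
theorem stmt_18 {α : Type} (p q r : α) (hpq : p ≠ q) (hpr : p ≠ r) (hqr : q ≠ r)
    (p0 : α) (g : α → ℝ) (hg : ∀ v, 0 < g v) (hgp : g q > g p) (hgr : g q > g r)
    (M : DeltaModel α) (hgb : GBased g M.S) :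
    sat M.toModel (Ob p0 (var p))
      ⊆ sat M.toModel (disj (Ob p0 (conj (var p) (var q)))
                            (Ob p0 (conj (var p) (neg (var q))))) := by
  suffices key : ∀ w : Set α, w ∈ sat M.toModel (Ob p0 (var p)) →
      w ∈ sat M.toModel (disj (Ob p0 (conj (var p) (var q)))
                              (Ob p0 (conj (var p) (neg (var q))))) by
    exact fun w hw => key w hw
  intro w hw
  have hsatp : sat M.toModel (var p) = {z : Set α | p ∈ z} := by
    simp [sat, DeltaModel.toModel]
  have hP1 : sat M.toModel (var p) ≠ ∅ := by
    rw [hsatp]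
    exact Set.nonempty_iff_ne_empty.mp ⟨({p} : Set α), by show p ∈ ({p} : Set α); simp⟩
  have hP2 : (sat M.toModel (var p))ᶜ ≠ ∅ := by
    rw [hsatp]
    exact Set.nonempty_iff_ne_empty.mp ⟨(∅ : Set α), by show (∅ : Set α) ∉ {z : Set α | p ∈ z}; simp⟩
  replace hw := (PrefAux.mem_Ob_iff M.toModel p0 (var p) w hP1 hP2).mp hw
  rw [hsatp] at hw
  obtain ⟨hSP, hSPc⟩ := PrefAux.keyP M p w
  simp only [DeltaModel.toModel] at hw
  rw [hSP] at hw
  replace hw : M.U (insert p w) > M.U (w \ {p}) := by rw [← hSPc]; exact hw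
  rw [PrefAux.sat_disj]
  by_cases hqw : q ∈ w
  · left
    have hsat1 : sat M.toModel (conj (var p) (var q)) =
        {z : Set α | p ∈ z ∧ (q ∈ z ↔ q ∈ w)} := by
      ext z
      simp [sat, DeltaModel.toModel, hqw]
      exact Iff.rfl
    have h1 : sat M.toModel (conj (var p) (var q)) ≠ ∅ := by
      rw [hsat1]
      exact Set.nonempty_iff_ne_empty.mp ⟨(insert p w : Set α), by show (insert p w : Set α) ∈ {z : Set α | p ∈ z ∧ (q ∈ z ↔ q ∈ w)}; simp [Ne.symm hpq]⟩
    have h2 : (sat M.toModel (conj (var p) (var q)))ᶜ ≠ ∅ := by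
      rw [hsat1]
      exact Set.nonempty_iff_ne_empty.mp ⟨(w \ {p} : Set α), by show (w \ {p} : Set α) ∉ {z : Set α | p ∈ z ∧ (q ∈ z ↔ q ∈ w)}; simp⟩
    refine (PrefAux.mem_Ob_iff M.toModel p0 _ w h1 h2).mpr ?_
    rw [hsat1]
    obtain ⟨hS1, hS2⟩ := PrefAux.keyA M hpq g hg hgp hgb w
    simp only [DeltaModel.toModel]
    rw [hS1]
    rw [← hS2] at hw
    exact hw
  · right
    have hsat2 : sat M.toModel (conj (var p) (neg (var q))) =
        {z : Set α | p ∈ z ∧ (q ∈ z ↔ q ∈ w)} := by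
      ext z
      simp [sat, DeltaModel.toModel, hqw]
      exact Iff.rfl
    have h1 : sat M.toModel (conj (var p) (neg (var q))) ≠ ∅ := by
      rw [hsat2]
      exact Set.nonempty_iff_ne_empty.mp ⟨(insert p w : Set α), by show (insert p w : Set α) ∈ {z : Set α | p ∈ z ∧ (q ∈ z ↔ q ∈ w)}; simp [Ne.symm hpq]⟩
    have h2 : (sat M.toModel (conj (var p) (neg (var q))))ᶜ ≠ ∅ := by
      rw [hsat2]
      exact Set.nonempty_iff_ne_empty.mp ⟨(w \ {p} : Set α), by show (w \ {p} : Set α) ∉ {z : Set α | p ∈ z ∧ (q ∈ z ↔ q ∈ w)}; simp⟩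
    refine (PrefAux.mem_Ob_iff M.toModel p0 _ w h1 h2).mpr ?_
    rw [hsat2]
    obtain ⟨hS1, hS2⟩ := PrefAux.keyA M hpq g hg hgp hgb w
    simp only [DeltaModel.toModel]
    rw [hS1]
    rw [← hS2] at hw
    exact hw
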